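/- Let G be a finite group and C₁, …, Cₙ cyclic subgroups of G. The induced characters (1_{C₁})^G, …, (1_{Cₙ})^G form a basis of the ℂ-subspace of class functions spanned by the rational-valued characters of G if and only if C₁, …, Cₙ is a complete set of representatives of the conjugacy classes of cyclic subgroups of G. -/

import Mathlib

/-- The induced character `(1_C)^G` of the trivial character of a subgroup `C`. -/
noncomputable def indTriv (G : Type) [Group G] [Fintype G] (C : Subgroup G) : G → ℂ :=
  fun g => (Nat.card {x : G // x⁻¹ * g * x ∈ C} : ℂ) / (Nat.card C : ℂ)

/-- `χ : G → ℂ` is a character: the trace of a nonzero finite-dimensional complex rep. -/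
def IsCharacter (G : Type) [Group G] (χ : G → ℂ) : Prop :=
  ∃ V : FDRep ℂ G, χ = V.character ∧ χ ≠ 0

/-- `χ` is an irreducible character of `G`. -/
def IsIrredChar (G : Type) [Group G] (χ : G → ℂ) : Prop :=
  ∃ V : FDRep ℂ G, CategoryTheory.Simple V ∧ χ = V.character

/-- All values of `χ` are rational. -/
def IsRatValued {G : Type} (χ : G → ℂ) : Prop := ∀ g : G, ∃ q : ℚ, χ g = (q : ℂ)

/-- Subgroups `H` and `K` are conjugate in `G`. -/
def SubConj {G : Type} [Group G] (H K : Subgroup G) : Prop :=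
  ∃ g : G, Subgroup.map (MulAut.conj g).toMonoidHom H = K

/-- The ℂ-subspace of `G → ℂ` spanned by the rational valued characters of `G`. -/
noncomputable def ratCharSpan (G : Type) [Group G] : Submodule ℂ (G → ℂ) :=
  Submodule.span ℂ {χ : G → ℂ | IsCharacter G χ ∧ IsRatValued χ}

/-- The number of conjugacy classes of cyclic subgroups of `G`. -/
noncomputable def numCyclicClasses (G : Type) [Group G] : ℕ :=
  Nat.card (Quot (fun H K : {H : Subgroup G // IsCyclic ↥H} => SubConj H.1 K.1))

/-- Indicator function of the set of `g` with `⟨g⟩` conjugate to `⟨x⟩`. -/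
noncomputable def Phi (G : Type) [Group G] (x : G) : G → ℂ := fun g =>
  letI := Classical.propDecidable
  if SubConj (Subgroup.zpowers g) (Subgroup.zpowers x) then 1 else 0

/-- The cyclotomic field `ℚ(e^{2πi/n})` as a subfield of `ℂ`. -/
noncomputable def cycField (n : ℕ) : IntermediateField ℚ ℂ :=
  IntermediateField.adjoin ℚ ({Complex.exp (2 * Real.pi * Complex.I / n)} : Set ℂ)

/-- `ψ` is in the `Gal(ℚ(ζ_n)/ℚ)`-orbit of `χ` (acting on character values). -/
def galRel (G : Type) [Group G] (n : ℕ) (χ ψ : G → ℂ) : Prop :=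
  ∃ σ : cycField n ≃ₐ[ℚ] cycField n,
    ∀ g : G, ∃ h : χ g ∈ cycField n, (σ ⟨χ g, h⟩ : ℂ) = ψ g

/-- The field `ℚ(χ)` generated by the values of `χ`. -/
noncomputable def charField (G : Type) (χ : G → ℂ) : IntermediateField ℚ ℂ :=
  IntermediateField.adjoin ℚ (Set.range χ)

/-- The rationalization `χ^rat = ∑_{σ ∈ Gal(ℚ(χ)/ℚ)} χ^σ`. -/
noncomputable def ratzn (G : Type) [Group G] (χ : G → ℂ) : G → ℂ :=
  fun g => ∑ᶠ σ : charField G χ ≃ₐ[ℚ] charField G χ,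
    (σ ⟨χ g, IntermediateField.subset_adjoin ℚ _ ⟨g, rfl⟩⟩ : ℂ)

/-- The induced character of a character `φ` of a subgroup `H`. -/
noncomputable def inducedChar (G : Type) [Group G] [Fintype G] (H : Subgroup G)
    (φ : H → ℂ) : G → ℂ := fun g =>
  letI := Classical.propDecidable
  (Nat.card H : ℂ)⁻¹ * ∑ x : G, if h : x⁻¹ * g * x ∈ H then φ ⟨x⁻¹ * g * x, h⟩ else 0

set_option maxHeartbeats 1000000
section Soft
variable {G : Type} [Group G]

lemma subConj_refl (H : Subgroup G) : SubConj H H := by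
  refine ⟨1, ?_⟩
  have : (MulAut.conj (1 : G)).toMonoidHom = MonoidHom.id G := by
    ext x; simp
  rw [this, Subgroup.map_id]

lemma map_conj_map_conj (y z : G) (H : Subgroup G) :
    Subgroup.map (MulAut.conj z).toMonoidHom (Subgroup.map (MulAut.conj y).toMonoidHom H)
      = Subgroup.map (MulAut.conj (z * y)).toMonoidHom H := by
  rw [Subgroup.map_map]
  congr 1
  ext x
  simp [mul_assoc]

lemma subConj_symm {H K : Subgroup G} (h : SubConj H K) : SubConj K H := by
  obtain ⟨y, rfl⟩ := h
  refine ⟨y⁻¹, ?_⟩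
  rw [map_conj_map_conj, inv_mul_cancel]
  have : (MulAut.conj (1 : G)).toMonoidHom = MonoidHom.id G := by ext x; simp
  rw [this, Subgroup.map_id]

lemma subConj_trans {H K L : Subgroup G} (h₁ : SubConj H K) (h₂ : SubConj K L) : SubConj H L := by
  obtain ⟨y, rfl⟩ := h₁; obtain ⟨z, rfl⟩ := h₂
  exact ⟨z * y, (map_conj_map_conj y z H).symm ▸ rfl⟩

lemma card_eq_of_subConj {H K : Subgroup G} (h : SubConj H K) : Nat.card H = Nat.card K := by
  obtain ⟨y, rfl⟩ := h
  exact Nat.card_congr (Subgroup.equivMapOfInjective H _ (MulAut.conj y).injective).toEquiv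

lemma mem_map_conj_iff {H : Subgroup G} {y x : G} :
    x ∈ Subgroup.map (MulAut.conj y).toMonoidHom H ↔ y⁻¹ * x * y ∈ H := by
  constructor
  · rintro ⟨h, hh, rfl⟩
    simpa [mul_assoc] using hh
  · intro hx
    exact ⟨y⁻¹ * x * y, hx, by simp [mul_assoc]⟩

/-- conjugate of zpowers -/
lemma map_conj_zpowers (y g : G) :
    Subgroup.map (MulAut.conj y).toMonoidHom (Subgroup.zpowers g)
      = Subgroup.zpowers (y * g * y⁻¹) := by
  simpa using MonoidHom.map_zpowers (MulAut.conj y).toMonoidHom g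

/-- If `z⁻¹ g z ∈ D` then `⟨g⟩` is conjugate to a subgroup of `D`. -/
lemma zpowers_conj_le {D : Subgroup G} {z g : G} (h : z⁻¹ * g * z ∈ D) :
    Subgroup.map (MulAut.conj z⁻¹).toMonoidHom (Subgroup.zpowers g) ≤ D := by
  rw [map_conj_zpowers]
  simpa [mul_assoc] using (Subgroup.zpowers_le).2 h

lemma orderOf_conj' (y g : G) : orderOf (y * g * y⁻¹) = orderOf g := by
  have := orderOf_injective (MulAut.conj y).toMonoidHom (MulAut.conj y).injective g
  simpa using this

lemma orderOf_conj_inv (z g : G) : orderOf (z⁻¹ * g * z) = orderOf g := by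
  have := orderOf_conj' z⁻¹ g
  simpa using this

lemma orderOf_le_card_of_conj_mem [Finite G] {D : Subgroup G} {z g : G}
    (h : z⁻¹ * g * z ∈ D) : orderOf g ≤ Nat.card D := by
  have h1 : Nat.card (Subgroup.zpowers (z⁻¹ * g * z)) ≤ Nat.card D :=
    Subgroup.card_le_of_le (by simpa using (Subgroup.zpowers_le).2 h)
  rwa [Nat.card_zpowers, orderOf_conj_inv] at h1

lemma subConj_of_conj_mem_of_card_le [Finite G] {D : Subgroup G} {z g : G}
    (h : z⁻¹ * g * z ∈ D) (hcard : Nat.card D ≤ orderOf g) :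
    SubConj (Subgroup.zpowers g) D := by
  refine ⟨z⁻¹, ?_⟩
  rw [map_conj_zpowers, inv_inv]
  have hle : Subgroup.zpowers (z⁻¹ * g * z) ≤ D := by
    simpa using (Subgroup.zpowers_le).2 h
  refine Subgroup.eq_of_le_of_card_ge hle ?_
  rwa [Nat.card_zpowers, orderOf_conj_inv]

section Part2
variable {G : Type} [Group G] [Fintype G]

lemma conj_zpow' (x g : G) (k : ℤ) : x⁻¹ * g ^ k * x = (x⁻¹ * g * x) ^ k := by
  have h : x⁻¹ * g * x = x⁻¹ * g * (x⁻¹)⁻¹ := by rw [inv_inv]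
  rw [h, conj_zpow, inv_inv]

/-- powers transfer: if `⟨g⟩ = ⟨h⟩` then conj-membership conditions agree. -/
lemma conj_mem_iff_of_zpowers_eq {g h : G} (hz : Subgroup.zpowers g = Subgroup.zpowers h)
    (C : Subgroup G) (x : G) : x⁻¹ * g * x ∈ C ↔ x⁻¹ * h * x ∈ C := by
  have hgh : h ∈ Subgroup.zpowers g := hz ▸ Subgroup.mem_zpowers h
  have hhg : g ∈ Subgroup.zpowers h := hz ▸ Subgroup.mem_zpowers g
  obtain ⟨k, hk⟩ := hgh
  obtain ⟨l, hl⟩ := hhg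
  simp only at hk hl
  constructor
  · intro hm
    have h1 : x⁻¹ * h * x = (x⁻¹ * g * x) ^ k := by rw [← hk, conj_zpow']
    rw [h1]; exact zpow_mem hm k
  · intro hm
    have h1 : x⁻¹ * g * x = (x⁻¹ * h * x) ^ l := by rw [← hl, conj_zpow']
    rw [h1]; exact zpow_mem hm l

/-- `indTriv C` only depends on the conjugacy class of the cyclic subgroup generated. -/
lemma indTriv_const_on_classes {g h : G} (hgh : SubConj (Subgroup.zpowers g) (Subgroup.zpowers h))
    (C : Subgroup G) : indTriv G C g = indTriv G C h := by
  obtain ⟨y, hy⟩ := hgh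
  have hy' : Subgroup.zpowers (y * g * y⁻¹) = Subgroup.zpowers h := by
    rw [← hy]
    simpa using (MonoidHom.map_zpowers (MulAut.conj y).toMonoidHom g).symm
  have e1 : {x : G // x⁻¹ * g * x ∈ C} ≃ {x : G // x⁻¹ * (y * g * y⁻¹) * x ∈ C} := by
    refine ⟨fun x => ⟨y * x.1, ?_⟩, fun x => ⟨y⁻¹ * x.1, ?_⟩, fun x => by ext; simp,
      fun x => by ext; simp⟩
    · have hx := x.2
      have h1 : (y * x.1)⁻¹ * (y * g * y⁻¹) * (y * x.1) = x.1⁻¹ * g * x.1 := by group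
      rw [h1]; exact hx
    · have hx := x.2
      have h1 : (y⁻¹ * x.1)⁻¹ * g * (y⁻¹ * x.1) = x.1⁻¹ * (y * g * y⁻¹) * x.1 := by group
      rw [h1]; exact hx
  have e2 : ∀ x : G, x⁻¹ * (y * g * y⁻¹) * x ∈ C ↔ x⁻¹ * h * x ∈ C :=
    conj_mem_iff_of_zpowers_eq hy' C
  unfold indTriv
  congr 2
  rw [Nat.card_congr e1]
  exact Nat.card_congr (Equiv.subtypeEquivRight e2)

/-- `indTriv` is invariant under conjugating the subgroup. -/
lemma indTriv_conj_subgroup {C C' : Subgroup G} (h : SubConj C C') :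
    indTriv G C = indTriv G C' := by
  have hcard := card_eq_of_subConj h
  obtain ⟨y, rfl⟩ := h
  funext g
  unfold indTriv
  rw [hcard]
  congr 2
  refine Nat.card_congr ⟨fun x => ⟨x.1 * y⁻¹, ?_⟩, fun x => ⟨x.1 * y, ?_⟩, fun x => by ext; simp,
    fun x => by ext; simp⟩
  · rw [mem_map_conj_iff]
    have h1 : y⁻¹ * ((x.1 * y⁻¹)⁻¹ * g * (x.1 * y⁻¹)) * y = x.1⁻¹ * g * x.1 := by group
    rw [h1]; exact x.2
  · have hx := x.2
    rw [mem_map_conj_iff] at hx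
    have h1 : (x.1 * y)⁻¹ * g * (x.1 * y) = y⁻¹ * (x.1⁻¹ * g * x.1) * y := by group
    rw [h1]; exact hx

lemma indTriv_ne_zero_of_conj_mem {C : Subgroup G} {g z : G} (h : z⁻¹ * g * z ∈ C) :
    indTriv G C g ≠ 0 := by
  have h1 : Nat.card {x : G // x⁻¹ * g * x ∈ C} ≠ 0 := by
    have : Nonempty {x : G // x⁻¹ * g * x ∈ C} := ⟨⟨z, h⟩⟩
    simp [Nat.card_pos.ne']
  have h2 : Nat.card C ≠ 0 := Nat.card_pos.ne'
  unfold indTriv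
  exact div_ne_zero (Nat.cast_ne_zero.2 h1) (Nat.cast_ne_zero.2 h2)

lemma exists_conj_mem_of_indTriv_ne_zero {C : Subgroup G} {g : G} (h : indTriv G C g ≠ 0) :
    ∃ z : G, z⁻¹ * g * z ∈ C := by
  by_contra hc
  push_neg at hc
  have : IsEmpty {x : G // x⁻¹ * g * x ∈ C} := ⟨fun x => hc x.1 x.2⟩
  apply h
  unfold indTriv
  simp [Nat.card_of_isEmpty]

omit [Fintype G] in
/-- every cyclic subgroup is `zpowers` of an element. -/
lemma exists_zpowers_eq {H : Subgroup G} (hH : IsCyclic ↥H) :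
    ∃ x : G, H = Subgroup.zpowers x := by
  obtain ⟨⟨x, hxH⟩, hx⟩ := hH
  refine ⟨x, le_antisymm ?_ ?_⟩
  · intro h hh
    obtain ⟨k, hk⟩ := hx ⟨h, hh⟩
    exact ⟨k, by simpa using congrArg (Subtype.val) hk⟩
  · simpa using Subgroup.zpowers_le.2 hxH
end Part2

section Perm
attribute [local instance] Classical.propDecidable
variable {G : Type} [Group G] [Fintype G]

open LinearMap in
/-- trace of the "precompose with σ" endomorphism of `X → ℂ` counts fixed points of σ. -/
lemma trace_funLeft {X : Type} [Fintype X] [DecidableEq X] (σ : X → X) :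
    LinearMap.trace ℂ (X → ℂ) (LinearMap.funLeft ℂ ℂ σ) =
      (Finset.univ.filter (fun x : X => σ x = x)).card := by
  classical
  rw [LinearMap.trace_eq_matrix_trace ℂ (Pi.basisFun ℂ X), Matrix.trace]
  have h : ∀ x : X, Matrix.diag (LinearMap.toMatrix (Pi.basisFun ℂ X) (Pi.basisFun ℂ X)
      (LinearMap.funLeft ℂ ℂ σ)) x = if σ x = x then (1 : ℂ) else 0 := by
    intro x
    rw [Matrix.diag_apply, LinearMap.toMatrix_apply]
    simp [LinearMap.funLeft_apply, Pi.single_apply, eq_comm]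
  rw [Finset.sum_congr rfl (fun x _ => h x), Finset.sum_boole]

/-- the permutation representation of `G` on functions on `G ⧸ C`. -/
noncomputable def permRep (C : Subgroup G) : Representation ℂ G ((G ⧸ C) → ℂ) where
  toFun g := LinearMap.funLeft ℂ ℂ (fun x => g⁻¹ • x)
  map_one' := by
    ext f x
    simp [LinearMap.funLeft_apply]
  map_mul' g h := by
    ext f x
    simp [LinearMap.funLeft_apply, mul_smul]

lemma fixed_iff {C : Subgroup G} (g : G) (x : G) :
    g • (QuotientGroup.mk x : G ⧸ C) = ↑x ↔ x⁻¹ * g * x ∈ C := by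
  rw [MulAction.Quotient.smul_mk, QuotientGroup.eq]
  constructor
  · intro h
    have h2 : ((g • x)⁻¹ * x)⁻¹ ∈ C := inv_mem h
    have h3 : ((g • x)⁻¹ * x)⁻¹ = x⁻¹ * g * x := by
      show ((g * x)⁻¹ * x)⁻¹ = _
      group
    rwa [h3] at h2
  · intro h
    have h3 : ((g • x)⁻¹ * x) = (x⁻¹ * g * x)⁻¹ := by
      show ((g * x)⁻¹ * x) = _
      group
    rw [h3]
    exact inv_mem h

/-- the fiber counting lemma -/
lemma card_conj_mem_eq {C : Subgroup G} (g : G) :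
    (Finset.univ.filter (fun x : G => x⁻¹ * g * x ∈ C)).card =
      (Finset.univ.filter (fun z : G ⧸ C => g • z = z)).card * Nat.card C := by
  rw [Finset.card_eq_sum_card_fiberwise
    (f := fun x : G => (QuotientGroup.mk x : G ⧸ C))
    (t := Finset.univ.filter (fun z : G ⧸ C => g • z = z)) ?_]
  · rw [Finset.sum_congr rfl (g := fun _ => Nat.card C) ?_, Finset.sum_const, smul_eq_mul]
    intro z hz
    rw [Finset.mem_filter] at hz
    obtain ⟨x₀, rfl⟩ := QuotientGroup.mk_surjective z
    have hset : (Finset.univ.filter (fun x : G => x⁻¹ * g * x ∈ C)).filter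
        (fun x => (QuotientGroup.mk x : G ⧸ C) = ↑x₀) =
        Finset.univ.filter (fun x : G => (QuotientGroup.mk x : G ⧸ C) = ↑x₀) := by
      ext x
      simp only [Finset.mem_filter, Finset.mem_univ, true_and]
      constructor
      · rintro ⟨-, h2⟩; exact h2
      · intro h2
        refine ⟨?_, h2⟩
        rw [← fixed_iff g x, h2]
        exact hz.2
    rw [hset]
    have hCeq : Nat.card C = Nat.card {x : G // (QuotientGroup.mk x : G ⧸ C) = ↑x₀} := by
      refine Nat.card_congr
        ⟨fun c => ⟨x₀ * c.1, ?_⟩, fun x => ⟨x₀⁻¹ * x.1, ?_⟩, fun c => by ext; simp,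
          fun x => by ext; simp⟩
      · have h4 : (x₀ * c.1)⁻¹ * x₀ = c.1⁻¹ := by group
        rw [QuotientGroup.eq, h4]
        exact inv_mem c.2
      · have hx := x.2
        rw [QuotientGroup.eq] at hx
        have h4 : x.1⁻¹ * x₀ ∈ C := hx
        have h5 : x₀⁻¹ * x.1 = (x.1⁻¹ * x₀)⁻¹ := by group
        rw [h5]
        exact inv_mem h4
    rw [hCeq, Nat.card_eq_fintype_card, Fintype.card_subtype]
  · intro x hx
    rw [Finset.mem_coe, Finset.mem_filter] at hx
    rw [Finset.mem_coe, Finset.mem_filter]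
    exact ⟨Finset.mem_univ _, (fixed_iff g x).2 hx.2⟩

lemma isCharacter_indTriv (C : Subgroup G) : IsCharacter G (indTriv G C) := by
  refine ⟨FDRep.of (permRep C), ?_, ?_⟩
  · funext g
    have hchar : (FDRep.of (permRep C)).character g =
        LinearMap.trace ℂ ((G ⧸ C) → ℂ) (LinearMap.funLeft ℂ ℂ (fun x => g⁻¹ • x)) := rfl
    rw [hchar, trace_funLeft]
    have hfix : ∀ z : G ⧸ C, g⁻¹ • z = z ↔ g • z = z := by
      intro z
      constructor
      · intro h; conv_lhs => rw [← h]
        rw [smul_smul, mul_inv_cancel, one_smul]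
      · intro h; conv_lhs => rw [← h]
        rw [smul_smul, inv_mul_cancel, one_smul]
    have hcount := card_conj_mem_eq (C := C) g
    have hnc : Nat.card {x : G // x⁻¹ * g * x ∈ C}
        = (Finset.univ.filter (fun x : G => x⁻¹ * g * x ∈ C)).card := by
      rw [Nat.card_eq_fintype_card, Fintype.card_subtype]
    unfold indTriv
    rw [hnc, hcount]
    have hCne : (Nat.card C : ℂ) ≠ 0 := Nat.cast_ne_zero.2 Nat.card_pos.ne'
    rw [Nat.cast_mul]
    rw [mul_div_assoc, div_self hCne, mul_one]
    congr 1
    apply Finset.card_bij (fun z _ => z) <;> simp [hfix]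
  · intro h
    have h1 := congrFun h 1
    unfold indTriv at h1
    simp only [Pi.zero_apply] at h1
    have : ∀ x : G, x⁻¹ * 1 * x ∈ C := by intro x; simpa using C.one_mem
    rw [div_eq_zero_iff] at h1
    rcases h1 with h1 | h1
    · rw [Nat.cast_eq_zero] at h1
      have : Nonempty {x : G // x⁻¹ * 1 * x ∈ C} := ⟨⟨1, this 1⟩⟩
      exact absurd h1 Nat.card_pos.ne'
    · exact absurd h1 (Nat.cast_ne_zero.2 Nat.card_pos.ne')

lemma isRatValued_indTriv (C : Subgroup G) : IsRatValued (indTriv G C) := by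
  intro g
  exact ⟨(Nat.card {x : G // x⁻¹ * g * x ∈ C} : ℚ) / (Nat.card C : ℚ), by push_cast [indTriv]; ring⟩
end Perm

section Proj
variable {V : Type} [AddCommGroup V] [Module ℂ V] [FiniteDimensional ℂ V]

open Finset in
/-- geometric-sum idempotent: if `B ^ m = 1` then `(1/m) ∑ B^j` is idempotent. -/
lemma sum_pow_idem (B : Module.End ℂ V) (m : ℕ) (hm : 0 < m) (hB : B ^ m = 1) :
    ((m : ℂ)⁻¹ • ∑ j ∈ range m, B ^ j) * ((m : ℂ)⁻¹ • ∑ j ∈ range m, B ^ j)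
      = (m : ℂ)⁻¹ • ∑ j ∈ range m, B ^ j := by
  set S : Module.End ℂ V := ∑ j ∈ range m, B ^ j with hS
  have hBS : B * S = S := by
    rw [hS, Finset.mul_sum]
    have h1 : ∀ j ∈ range m, B * B ^ j = B ^ (j + 1) := fun j _ => (pow_succ' B j).symm
    rw [Finset.sum_congr rfl h1]
    have h2 : ∑ j ∈ range m, B ^ (j + 1) = (∑ j ∈ range (m + 1), B ^ j) - 1 := by
      rw [Finset.sum_range_succ' (fun j => B ^ j) m]
      simp
    rw [h2, Finset.sum_range_succ, hB]
    abel
  have hpowS : ∀ j, B ^ j * S = S := by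
    intro j
    induction j with
    | zero => simp
    | succ j ih => rw [pow_succ, mul_assoc, hBS, ih]
  have hSS : S * S = (m : ℂ) • S := by
    rw [hS, Finset.sum_mul, Finset.sum_congr rfl (fun j _ => hpowS j)]
    simp [Finset.sum_const, Nat.cast_smul_eq_nsmul ℂ, hS]
  have hmne : (m : ℂ) ≠ 0 := Nat.cast_ne_zero.2 hm.ne'
  rw [smul_mul_smul_comm, hSS, smul_smul]
  congr 1
  field_simp

/-- trace of such an idempotent is a natural number. -/
lemma trace_sum_pow_nat (B : Module.End ℂ V) (m : ℕ) (hm : 0 < m) (hB : B ^ m = 1) :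
    ∃ d : ℕ, LinearMap.trace ℂ V ((m : ℂ)⁻¹ • ∑ j ∈ Finset.range m, B ^ j) = d := by
  have hidem := sum_pow_idem B m hm hB
  have : ∃ p : Submodule ℂ V, LinearMap.IsProj p ((m : ℂ)⁻¹ • ∑ j ∈ Finset.range m, B ^ j) := by
    rw [LinearMap.isProj_iff_isIdempotentElem]
    exact hidem
  obtain ⟨p, hp⟩ := this
  exact ⟨Module.finrank ℂ p, hp.trace⟩

open Finset in
/-- Fourier expansion of traces of powers. -/
lemma trace_pow_expansion (A : Module.End ℂ V) (m : ℕ) (hm : 0 < m) (hA : A ^ m = 1)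
    {ζ : ℂ} (hζ : IsPrimitiveRoot ζ m) {j : ℕ} (hj : j < m) :
    LinearMap.trace ℂ V (A ^ j) =
      ∑ a ∈ range m, (LinearMap.trace ℂ V
        ((m : ℂ)⁻¹ • ∑ i ∈ range m, ((ζ ^ a)⁻¹ • A) ^ i)) * ζ ^ (a * j) := by
  have hζm : ζ ^ m = 1 := hζ.pow_eq_one
  have hmne : (m : ℂ) ≠ 0 := Nat.cast_ne_zero.2 hm.ne'
  -- rewrite each summand
  have hsummand : ∀ a, (LinearMap.trace ℂ V
        ((m : ℂ)⁻¹ • ∑ i ∈ range m, ((ζ ^ a)⁻¹ • A) ^ i)) * ζ ^ (a * j) =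
      LinearMap.trace ℂ V ((m : ℂ)⁻¹ • ∑ i ∈ range m, ((ζ ^ j * (ζ ^ i)⁻¹) ^ a) • A ^ i) := by
    intro a
    rw [mul_comm, ← smul_eq_mul, ← LinearMap.map_smul]
    congr 1
    rw [smul_comm (ζ ^ (a * j)) ((m : ℂ)⁻¹)]
    congr 1
    rw [Finset.smul_sum]
    refine Finset.sum_congr rfl fun i _ => ?_
    rw [smul_pow, smul_smul]
    congr 1
    have h1 : ζ ^ (a * j) * ((ζ ^ a)⁻¹) ^ i = ζ ^ (a * j) * (ζ ^ (a * i))⁻¹ := by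
      rw [inv_pow, ← pow_mul]
    have h2 : (ζ ^ j * (ζ ^ i)⁻¹) ^ a = ζ ^ (j * a) * (ζ ^ (i * a))⁻¹ := by
      rw [mul_pow, inv_pow, ← pow_mul, ← pow_mul]
    rw [h1, h2, mul_comm a j, mul_comm a i]
  rw [Finset.sum_congr rfl fun a _ => hsummand a]
  rw [← map_sum]
  congr 1
  rw [← Finset.smul_sum, Finset.sum_comm]
  have hinner : ∀ i ∈ range m, ∑ a ∈ range m, ((ζ ^ j * (ζ ^ i)⁻¹) ^ a) • A ^ i
      = (if i = j then (m : ℂ) else 0) • A ^ i := by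
    intro i hi
    rw [← Finset.sum_smul]
    congr 1
    set w : ℂ := ζ ^ j * (ζ ^ i)⁻¹ with hw
    have hwm : w ^ m = 1 := by
      rw [hw, mul_pow, ← pow_mul, mul_comm j m, pow_mul, hζm, one_pow, inv_pow, ← pow_mul,
        mul_comm i m, pow_mul, hζm, one_pow, inv_one, one_mul]
    by_cases hij : i = j
    · subst hij
      have : w = 1 := by
        rw [hw, mul_inv_cancel₀]
        exact pow_ne_zero _ (hζ.ne_zero hm.ne')
      simp [this]
    · have hwne : w ≠ 1 := by
        intro hww
        apply hij
        rw [hw] at hww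
        have h3 : ζ ^ j = ζ ^ i := by
          rwa [mul_inv_eq_one₀ (pow_ne_zero _ (hζ.ne_zero hm.ne'))] at hww
        exact (hζ.pow_inj (Finset.mem_range.1 hi) hj h3.symm)
      rw [geom_sum_eq hwne, hwm]
      simp [hij]
  rw [Finset.sum_congr rfl hinner]
  simp only [ite_smul, zero_smul]
  rw [Finset.sum_ite_eq' (range m) j]
  simp only [Finset.mem_range.2 hj, if_true]
  rw [smul_smul, inv_mul_cancel₀ hmne, one_smul]
end Proj

section RatConst
variable {G : Type} [Group G] [Fintype G]

open Polynomial in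
lemma ratchar_zpowers_eq (V : FDRep ℂ G) (hrat : IsRatValued V.character) {g h : G}
    (hz : Subgroup.zpowers g = Subgroup.zpowers h) : V.character g = V.character h := by
  have hm : 0 < orderOf g := orderOf_pos g
  set m := orderOf g with hmdef
  -- h is a power of g
  have hmem : h ∈ Submonoid.powers g :=
    mem_powers_iff_mem_zpowers.2 (hz ▸ Subgroup.mem_zpowers h)
  obtain ⟨k, hk⟩ := hmem
  simp only at hk
  -- orders agree
  have horder : orderOf h = m := by
    rw [← Nat.card_zpowers, ← hz, Nat.card_zpowers]
  by_cases hm1 : m = 1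
  · have hg1 : g = 1 := orderOf_eq_one_iff.1 hm1
    rw [← hk, hg1, one_pow]
  have hm2 : 1 < m := lt_of_le_of_ne hm (Ne.symm hm1)
  -- the reduced exponent
  set j := k % m with hjdef
  have hjm : j < m := Nat.mod_lt _ hm
  have hgj : g ^ j = g ^ k := pow_mod_orderOf g k
  have hcop : Nat.Coprime j m := by
    have h1 : orderOf (g ^ j) = m := by rw [hgj, hk, horder]
    rw [orderOf_pow] at h1
    rw [← hmdef] at h1
    have h2 : Nat.gcd m j = 1 := by
      rcases (Nat.div_eq_self.1 h1) with h3 | h3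
      · omega
      · exact h3
    exact Nat.coprime_comm.1 h2
  -- the primitive root
  set ζ : ℂ := Complex.exp (2 * Real.pi * Complex.I / m) with hζdef
  have hζ : IsPrimitiveRoot ζ m := Complex.isPrimitiveRoot_exp m hm.ne'
  -- the endomorphism
  set A := V.ρ g with hAdef
  have hApow : ∀ i : ℕ, V.ρ (g ^ i) = A ^ i := fun i => map_pow V.ρ g i
  have hAm : A ^ m = 1 := by rw [← hApow, pow_orderOf_eq_one, map_one]
  -- the coefficients
  have hd : ∀ a : ℕ, ∃ dn : ℕ, LinearMap.trace ℂ V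
      ((m : ℂ)⁻¹ • ∑ i ∈ Finset.range m, ((ζ ^ a)⁻¹ • A) ^ i) = dn := by
    intro a
    refine trace_sum_pow_nat _ m hm ?_
    rw [_root_.smul_pow, inv_pow, ← pow_mul, mul_comm a m, pow_mul, hζ.pow_eq_one, one_pow, inv_one,
      one_smul, hAm]
  choose d hdspec using hd
  -- rational value of χ g
  obtain ⟨q, hq⟩ := hrat g
  -- character values as traces
  have hchar : ∀ i : ℕ, V.character (g ^ i) = LinearMap.trace ℂ V (A ^ i) := by
    intro i
    rw [FDRep.character, hApow]
  -- the polynomial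
  set P : ℚ[X] := (∑ a ∈ Finset.range m, Polynomial.C ((d a : ℚ)) * Polynomial.X ^ a)
    - Polynomial.C q with hPdef
  have haevalP : ∀ z : ℂ, Polynomial.aeval z P
      = (∑ a ∈ Finset.range m, (d a : ℂ) * z ^ a) - (q : ℂ) := by
    intro z
    rw [hPdef, map_sub, Polynomial.aeval_C, map_sum]
    congr 1
    refine Finset.sum_congr rfl fun a _ => ?_
    rw [map_mul, Polynomial.aeval_C, map_pow, Polynomial.aeval_X]
    norm_cast
  have hPζ : Polynomial.aeval ζ P = 0 := by
    rw [haevalP]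
    have hexp := trace_pow_expansion A m hm hAm hζ hm2
    rw [pow_one] at hexp
    have h5 : V.character g = LinearMap.trace ℂ V A := by
      conv_lhs => rw [show g = g ^ 1 by rw [pow_one]]
      rw [hchar, pow_one]
    have h6 : (∑ a ∈ Finset.range m, (d a : ℂ) * ζ ^ a) = V.character g := by
      rw [h5, hexp]
      refine Finset.sum_congr rfl fun a _ => ?_
      rw [hdspec, mul_one]
    rw [h6, hq, sub_self]
  have hdvd : minpoly ℚ ζ ∣ P := minpoly.dvd ℚ ζ hPζ
  -- ζ^j is a root of the minimal polynomial
  have hζj : IsPrimitiveRoot (ζ ^ j) m := hζ.pow_of_coprime j hcop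
  have hroot : Polynomial.aeval (ζ ^ j) (minpoly ℚ ζ) = 0 := by
    rw [← cyclotomic_eq_minpoly_rat hζ hm]
    rw [Polynomial.aeval_def, Polynomial.eval₂_eq_eval_map, Polynomial.map_cyclotomic]
    exact hζj.isRoot_cyclotomic hm
  have hPζj : Polynomial.aeval (ζ ^ j) P = 0 := by
    obtain ⟨t, ht⟩ := hdvd
    rw [ht, map_mul, hroot, zero_mul]
  rw [haevalP] at hPζj
  -- conclude
  have hζja : ∀ a : ℕ, (ζ ^ j) ^ a = ζ ^ (a * j) := by
    intro a
    rw [← pow_mul, mul_comm j a]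
  have hfinal : V.character h = (q : ℂ) := by
    have h7 : V.character h = LinearMap.trace ℂ V (A ^ j) := by
      rw [← hk, ← hgj, hchar]
    rw [h7, trace_pow_expansion A m hm hAm hζ hjm]
    have h8 : ∀ a ∈ Finset.range m, (LinearMap.trace ℂ V
        ((m : ℂ)⁻¹ • ∑ i ∈ Finset.range m, ((ζ ^ a)⁻¹ • A) ^ i)) * ζ ^ (a * j)
        = (d a : ℂ) * (ζ ^ j) ^ a := by
      intro a _
      rw [hdspec, hζja]
    rw [Finset.sum_congr rfl h8]
    exact sub_eq_zero.1 hPζj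
  rw [hq, hfinal]

section Struct
attribute [local instance] Classical.propDecidable
variable {G : Type} [Group G]

/-- the conjugation equivalence on generated cyclic subgroups. -/
def cycSetoid (G : Type) [Group G] : Setoid G :=
  ⟨fun g h => SubConj (Subgroup.zpowers g) (Subgroup.zpowers h),
    ⟨fun _ => subConj_refl _, subConj_symm, subConj_trans⟩⟩

lemma cycSetoid_rel {g h : G} :
    (cycSetoid G).r g h ↔ SubConj (Subgroup.zpowers g) (Subgroup.zpowers h) := Iff.rfl

lemma isCyclic_zpowers (x : G) : IsCyclic ↥(Subgroup.zpowers x) := by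
  refine ⟨⟨⟨x, Subgroup.mem_zpowers x⟩, ?_⟩⟩
  rintro ⟨y, k, rfl⟩
  exact ⟨k, by ext; simp⟩

noncomputable instance fintypeCycQuot [Fintype G] : Fintype (Quotient (cycSetoid G)) :=
  Fintype.ofFinite _

/-- the distinguished family of indicator functions, one per class. -/
noncomputable def PhiFam (G : Type) [Group G] : Quotient (cycSetoid G) → (G → ℂ) :=
  fun q => Phi G q.out

lemma Phi_eq_indicator (x g : G) :
    Phi G x g = if (⟦g⟧ : Quotient (cycSetoid G)) = ⟦x⟧ then (1 : ℂ) else 0 := by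
  unfold Phi
  by_cases h : SubConj (Subgroup.zpowers g) (Subgroup.zpowers x)
  · rw [if_pos h, if_pos (Quotient.sound h)]
  · rw [if_neg h, if_neg (fun hq => h (Quotient.exact hq))]

lemma mk_out_subConj (g : G) :
    SubConj (Subgroup.zpowers ((⟦g⟧ : Quotient (cycSetoid G)).out)) (Subgroup.zpowers g) :=
  Quotient.mk_out (s := cycSetoid G) g

lemma Phi_congr {x y : G} (h : SubConj (Subgroup.zpowers x) (Subgroup.zpowers y)) :
    Phi G x = Phi G y := by
  funext g
  rw [Phi_eq_indicator, Phi_eq_indicator, Quotient.sound (s := cycSetoid G) h]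

variable [Fintype G]

/-- decomposition of class-constant functions over the indicator family. -/
lemma decomp (f : G → ℂ)
    (hf : ∀ g h : G, SubConj (Subgroup.zpowers g) (Subgroup.zpowers h) → f g = f h) :
    f = ∑ q : Quotient (cycSetoid G), f q.out • Phi G q.out := by
  funext g
  rw [Finset.sum_apply]
  have h1 : ∀ q : Quotient (cycSetoid G),
      (f q.out • Phi G q.out) g = if (⟦g⟧ : Quotient (cycSetoid G)) = q then f q.out else 0 := by
    intro q
    rw [Pi.smul_apply, smul_eq_mul, Phi_eq_indicator]
    conv_lhs => rw [← Quotient.out_eq q]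
    rw [mul_ite, mul_one, mul_zero]
    by_cases h : (⟦g⟧ : Quotient (cycSetoid G)) = ⟦q.out⟧ <;> simp [h, Quotient.out_eq]
  rw [Finset.sum_congr rfl (fun q _ => h1 q), Finset.sum_ite_eq (Finset.univ) (⟦g⟧)]
  simp only [Finset.mem_univ, if_true]
  exact (hf _ _ (mk_out_subConj g)).symm

lemma mem_span_PhiFam (f : G → ℂ)
    (hf : ∀ g h : G, SubConj (Subgroup.zpowers g) (Subgroup.zpowers h) → f g = f h) :
    f ∈ Submodule.span ℂ (Set.range (PhiFam G)) := by
  rw [decomp f hf]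
  exact Submodule.sum_mem _ fun q _ =>
    Submodule.smul_mem _ _ (Submodule.subset_span ⟨q, rfl⟩)

lemma linearIndependent_PhiFam : LinearIndependent ℂ (PhiFam G) := by
  rw [Fintype.linearIndependent_iff]
  intro a ha q₀
  have heval := congrFun ha q₀.out
  rw [Finset.sum_apply] at heval
  have h1 : ∀ q : Quotient (cycSetoid G),
      (a q • PhiFam G q) q₀.out = if q₀ = q then a q else 0 := by
    intro q
    rw [Pi.smul_apply, smul_eq_mul, PhiFam, Phi_eq_indicator, Quotient.out_eq, Quotient.out_eq,
      mul_ite, mul_one, mul_zero]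
  rw [Finset.sum_congr rfl (fun q _ => h1 q), Finset.sum_ite_eq (Finset.univ) q₀] at heval
  simpa using heval

/-- The downward-induction engine: if for every `x` some conjugate of `⟨x⟩` has its induced
trivial character in `Sp`, then all the indicators `Phi x` lie in `Sp`. -/
lemma Phi_mem (Sp : Submodule ℂ (G → ℂ))
    (hyp : ∀ x : G, ∃ D : Subgroup G, SubConj (Subgroup.zpowers x) D ∧ indTriv G D ∈ Sp) :
    ∀ x : G, Phi G x ∈ Sp := by
  suffices H : ∀ n, ∀ x : G, orderOf x ≤ n → Phi G x ∈ Sp from fun x => H (orderOf x) x le_rfl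
  intro n
  induction n with
  | zero => exact fun x hx => absurd hx (by simpa using (orderOf_pos x).ne')
  | succ n ih =>
    intro x hx
    obtain ⟨D, hconj, hmem⟩ := hyp x
    have hcardD : Nat.card D = orderOf x := by
      rw [← card_eq_of_subConj hconj, Nat.card_zpowers]
    obtain ⟨y, hy⟩ := hconj
    have hxD : (y⁻¹)⁻¹ * x * y⁻¹ ∈ D := by
      rw [← hy, mem_map_conj_iff]
      have h2 : y⁻¹ * ((y⁻¹)⁻¹ * x * y⁻¹) * y = x := by group
      rw [h2]
      exact Subgroup.mem_zpowers x
    have hvx : indTriv G D x ≠ 0 := indTriv_ne_zero_of_conj_mem hxD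
    have hdec := decomp (indTriv G D) (fun g h hgh => indTriv_const_on_classes hgh D)
    set q₀ : Quotient (cycSetoid G) := ⟦x⟧ with hq₀
    set v : Quotient (cycSetoid G) → ℂ := fun q => indTriv G D q.out with hv
    have hvq₀ : v q₀ ≠ 0 := by
      have : v q₀ = indTriv G D x := indTriv_const_on_classes (mk_out_subConj x) D
      rw [this]; exact hvx
    have hsplit : indTriv G D
        = v q₀ • Phi G q₀.out + ∑ q ∈ Finset.univ.erase q₀, v q • Phi G q.out := by
      rw [hdec]
      exact (Finset.add_sum_erase _ _ (Finset.mem_univ q₀)).symm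
    have h2 : v q₀ • Phi G q₀.out
        = indTriv G D - ∑ q ∈ Finset.univ.erase q₀, v q • Phi G q.out :=
      eq_sub_of_add_eq hsplit.symm
    have h3 : Phi G q₀.out = (v q₀)⁻¹ •
        (indTriv G D - ∑ q ∈ Finset.univ.erase q₀, v q • Phi G q.out) := by
      rw [← h2, smul_smul, inv_mul_cancel₀ hvq₀, one_smul]
    have hphix : Phi G x = Phi G q₀.out :=
      Phi_congr (subConj_symm (mk_out_subConj x))
    rw [hphix, h3]
    refine Submodule.smul_mem _ _ (Submodule.sub_mem _ hmem (Submodule.sum_mem _ ?_))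
    intro q hq
    by_cases hvq : v q = 0
    · rw [hvq, zero_smul]; exact Submodule.zero_mem _
    · refine Submodule.smul_mem _ _ (ih q.out ?_)
      -- orderOf q.out < orderOf x
      obtain ⟨z, hz⟩ := exists_conj_mem_of_indTriv_ne_zero hvq
      have hle : orderOf (Quotient.out q) ≤ Nat.card D := orderOf_le_card_of_conj_mem hz
      have hne : orderOf (Quotient.out q) ≠ orderOf x := by
        intro heq
        have hsc : SubConj (Subgroup.zpowers q.out) D :=
          subConj_of_conj_mem_of_card_le hz (by rw [hcardD, ← heq])
        have hqx : SubConj (Subgroup.zpowers q.out) (Subgroup.zpowers x) :=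
          subConj_trans hsc (subConj_symm ⟨y, hy⟩)
        have : q = q₀ := by
          rw [hq₀, ← Quotient.out_eq q]
          exact Quotient.sound hqx
        exact (Finset.ne_of_mem_erase hq) this
      have : orderOf (Quotient.out q) < orderOf x := lt_of_le_of_ne (hcardD ▸ hle) hne
      omega

lemma indTriv_mem_ratCharSpan (D : Subgroup G) : indTriv G D ∈ ratCharSpan G :=
  Submodule.subset_span ⟨isCharacter_indTriv _, isRatValued_indTriv _⟩

lemma Phi_mem_ratCharSpan (x : G) : Phi G x ∈ ratCharSpan G :=
  Phi_mem _ (fun y => ⟨Subgroup.zpowers y, subConj_refl _, indTriv_mem_ratCharSpan _⟩) x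

lemma ratchar_const {χ : G → ℂ} (hχ : IsCharacter G χ) (hrat : IsRatValued χ) {g h : G}
    (hgh : SubConj (Subgroup.zpowers g) (Subgroup.zpowers h)) : χ g = χ h := by
  obtain ⟨V, rfl, -⟩ := hχ
  obtain ⟨y, hy⟩ := hgh
  have hz : Subgroup.zpowers (y * g * y⁻¹) = Subgroup.zpowers h := by
    rw [← hy]
    exact (by simpa using (MonoidHom.map_zpowers (MulAut.conj y).toMonoidHom g).symm)
  calc V.character g = V.character (y * g * y⁻¹) := (FDRep.char_conj V g y).symm
    _ = V.character h := ratchar_zpowers_eq V hrat hz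

lemma ratCharSpan_eq_spanPhi :
    ratCharSpan G = Submodule.span ℂ (Set.range (PhiFam G)) := by
  apply le_antisymm
  · rw [ratCharSpan, Submodule.span_le]
    rintro χ ⟨hχ, hrat⟩
    exact mem_span_PhiFam χ (fun g h hgh => ratchar_const hχ hrat hgh)
  · rw [Submodule.span_le]
    rintro f ⟨q, rfl⟩
    exact Phi_mem_ratCharSpan q.out
end Struct

section main
attribute [local instance] Classical.propDecidable
variable {G : Type} [Group G] [Fintype G]

lemma indTriv_self_ne_zero {C : Subgroup G} {g : G} (h : g ∈ C) : indTriv G C g ≠ 0 :=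
  indTriv_ne_zero_of_conj_mem (z := 1) (by simpa using h)

theorem stmt2 (G : Type) [Group G] [Fintype G] (n : ℕ) (C : Fin n → Subgroup G)
    (hC : ∀ i, IsCyclic ↥(C i)) :
    (LinearIndependent ℂ (fun i => indTriv G (C i)) ∧
        Submodule.span ℂ (Set.range fun i => indTriv G (C i)) = ratCharSpan G) ↔
      ∀ H : Subgroup G, IsCyclic ↥H → ∃! i, SubConj H (C i) := by
  choose xg hxg using fun i => exists_zpowers_eq (hC i)
  constructor
  · rintro ⟨hLI, hSp⟩ H hH
    obtain ⟨x, rfl⟩ := exists_zpowers_eq hH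
    have hinj : ∀ i j, SubConj (C i) (C j) → i = j := by
      intro i j hij
      exact hLI.injective (indTriv_conj_subgroup hij)
    -- dimension count
    have h1 : Module.finrank ℂ (Submodule.span ℂ (Set.range fun i => indTriv G (C i))) = n := by
      rw [finrank_span_eq_card hLI, Fintype.card_fin]
    have h2 : Module.finrank ℂ (Submodule.span ℂ (Set.range (PhiFam G)))
        = Fintype.card (Quotient (cycSetoid G)) := finrank_span_eq_card linearIndependent_PhiFam
    have hcards : Fintype.card (Quotient (cycSetoid G)) = n := by
      rw [← h2, ← ratCharSpan_eq_spanPhi, ← hSp, h1]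
    -- the classifying map
    set e : Fin n → Quotient (cycSetoid G) := fun i => ⟦xg i⟧ with he
    have heinj : Function.Injective e := by
      intro i j hij
      refine hinj i j ?_
      rw [hxg i, hxg j]
      exact cycSetoid_rel.1 (Quotient.exact hij)
    have hebij : Function.Bijective e :=
      (Fintype.bijective_iff_injective_and_card e).2 ⟨heinj, by rw [Fintype.card_fin, hcards]⟩
    obtain ⟨i, hi⟩ := hebij.2 ⟦x⟧
    have hix : SubConj (Subgroup.zpowers x) (C i) := by
      rw [hxg i]
      exact subConj_symm (cycSetoid_rel.1 (Quotient.exact hi))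
    refine ⟨i, hix, fun j hj => hinj j i (subConj_trans (subConj_symm hj) hix)⟩
  · intro hrep
    have hrep' : ∀ x : G, ∃ i, SubConj (Subgroup.zpowers x) (C i) := by
      intro x
      obtain ⟨i, hi, -⟩ := hrep (Subgroup.zpowers x) (isCyclic_zpowers x)
      exact ⟨i, hi⟩
    constructor
    · rw [Fintype.linearIndependent_iff]
      intro a ha
      by_contra hne
      push_neg at hne
      obtain ⟨i₁, hi₁⟩ := hne
      set S : Finset (Fin n) := Finset.univ.filter (fun i => a i ≠ 0) with hS
      have hSne : S.Nonempty := ⟨i₁, by simp [hS, hi₁]⟩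
      obtain ⟨i₀, hi₀S, hmax⟩ := S.exists_max_image (fun i => Nat.card (C i)) hSne
      have hxmem : xg i₀ ∈ C i₀ := by rw [hxg]; exact Subgroup.mem_zpowers _
      have heval := congrFun ha (xg i₀)
      rw [Finset.sum_apply, Pi.zero_apply] at heval
      rw [Finset.sum_eq_single i₀ ?_ (by simp)] at heval
      · have hne0 : indTriv G (C i₀) (xg i₀) ≠ 0 := indTriv_self_ne_zero hxmem
        have : a i₀ = 0 := by
          rw [Pi.smul_apply, smul_eq_mul] at heval
          rcases mul_eq_zero.1 heval with h | h
          · exact h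
          · exact absurd h hne0
        have : i₀ ∈ S := hi₀S
        rw [hS, Finset.mem_filter] at this
        exact this.2 ‹a i₀ = 0›
      · intro i _ hii₀
        by_cases hai : a i = 0
        · rw [Pi.smul_apply, hai, zero_smul]
        · have hiS : i ∈ S := by rw [hS, Finset.mem_filter]; exact ⟨Finset.mem_univ _, hai⟩
          -- show indTriv G (C i) (xg i₀) = 0
          have hz : indTriv G (C i) (xg i₀) = 0 := by
            by_contra hzz
            obtain ⟨z, hzmem⟩ := exists_conj_mem_of_indTriv_ne_zero hzz
            have hord : orderOf (xg i₀) = Nat.card (C i₀) := by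
              rw [← Nat.card_zpowers, ← hxg]
            have hle1 : Nat.card (C i₀) ≤ Nat.card (C i) := by
              rw [← hord]; exact orderOf_le_card_of_conj_mem hzmem
            have hle2 : Nat.card (C i) ≤ Nat.card (C i₀) := hmax i hiS
            have hsc : SubConj (Subgroup.zpowers (xg i₀)) (C i) :=
              subConj_of_conj_mem_of_card_le hzmem (by omega)
            rw [← hxg i₀] at hsc
            obtain ⟨i', -, huniq⟩ := hrep (C i₀) (hC i₀)
            have hii' : i = i' := huniq i hsc
            have hi₀i' : i₀ = i' := huniq i₀ (subConj_refl _)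
            exact hii₀ (by rw [hii', ← hi₀i'])
          rw [Pi.smul_apply, hz, smul_zero]
    · rw [ratCharSpan_eq_spanPhi]
      apply le_antisymm
      · rw [Submodule.span_le]
        rintro f ⟨i, rfl⟩
        exact mem_span_PhiFam _ (fun g h hgh => indTriv_const_on_classes hgh _)
      · rw [Submodule.span_le]
        rintro f ⟨q, rfl⟩
        refine Phi_mem _ ?_ q.out
        intro x
        obtain ⟨i, hi⟩ := hrep' x
        exact ⟨C i, hi, Submodule.subset_span ⟨i, rfl⟩⟩
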